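/- Let Φ be a crystallographic root system and R ⊆ Φ a Φ-poset (antisymmetric and closed). Then for any α₁, …, α_p ∈ R (with repetitions allowed, p ≥ 1), α₁ + ⋯ + α_p ≠ 0. -/

import Mathlib

open Pointwise

structure RootSys (V : Type*) [NormedAddCommGroup V] [InnerProductSpace ℝ V] where
  Φ : Set V
  finite : Φ.Finite
  nonzero : ∀ α ∈ Φ, α ≠ (0 : V)
  line : ∀ α ∈ Φ, Φ ∩ {x : V | ∃ t : ℝ, x = t • α} = {α, -α}
  reflect : ∀ α ∈ Φ, ∀ β ∈ Φ, β - (2 * (inner ℝ α β : ℝ) / (inner ℝ α α : ℝ)) • α ∈ Φ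

variable {V : Type*} [NormedAddCommGroup V] [InnerProductSpace ℝ V]

/-- `Φ` is crystallographic: `⟨α^∨, β⟩ ∈ ℤ` for all roots `α, β`. -/
def RootSys.IsCrystallographic (R : RootSys V) : Prop :=
  ∀ α ∈ R.Φ, ∀ β ∈ R.Φ, ∃ n : ℤ, 2 * (inner ℝ α β : ℝ) / (inner ℝ α α : ℝ) = (n : ℝ)

/-- A subset `S ⊆ Φ` is closed if it is stable under sums of two elements staying in `Φ`. -/
def RootSys.IsClosedSubset (R : RootSys V) (S : Set V) : Prop :=
  ∀ α ∈ S, ∀ β ∈ S, α + β ∈ R.Φ → α + β ∈ S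

/-- A set of roots is antisymmetric if it never contains both `α` and `-α`. -/
def IsAntisymSet (S : Set V) : Prop := ∀ α ∈ S, -α ∉ S

/-- A `Φ`-poset: an antisymmetric closed subset of `Φ`. -/
def RootSys.IsPoset (R : RootSys V) (S : Set V) : Prop :=
  S ⊆ R.Φ ∧ IsAntisymSet S ∧ R.IsClosedSubset S

/-- Closure: roots that are nonnegative integer combinations (multiset sums) of elements of `T`. -/
def RootSys.clos (R : RootSys V) (T : Set V) : Set V :=
  {γ ∈ R.Φ | ∃ M : Multiset V, (∀ x ∈ M, x ∈ T) ∧ M.sum = γ}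

/-- Nonnegative integer combinations (multiset sums) of elements of `T`. -/
def nncomb (T : Set V) : Set V :=
  {v | ∃ M : Multiset V, (∀ x ∈ M, x ∈ T) ∧ M.sum = v}

/-- A root system equipped with a generic linear functional determining positive roots. -/
structure PosRootSys (V : Type*) [NormedAddCommGroup V] [InnerProductSpace ℝ V]
    extends RootSys V where
  f : V →ₗ[ℝ] ℝ
  generic : ∀ α ∈ Φ, f α ≠ 0

def PosRootSys.Pos (P : PosRootSys V) : Set V := {α ∈ P.Φ | 0 < P.f α}

def PosRootSys.Neg (P : PosRootSys V) : Set V := {α ∈ P.Φ | P.f α < 0}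

/-- The weak order: `R ≼ S` iff `R⁺ ⊇ S⁺` and `R⁻ ⊆ S⁻`. -/
def PosRootSys.wle (P : PosRootSys V) (R S : Set V) : Prop :=
  S ∩ P.Pos ⊆ R ∩ P.Pos ∧ R ∩ P.Neg ⊆ S ∩ P.Neg

/-- `R` is semiclosed if both `R⁺` and `R⁻` are closed. -/
def PosRootSys.SemiClosed (P : PosRootSys V) (S : Set V) : Prop :=
  S ⊆ P.Φ ∧ P.toRootSys.IsClosedSubset (S ∩ P.Pos) ∧
    P.toRootSys.IsClosedSubset (S ∩ P.Neg)

/-- Negative closure deletion. -/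
def PosRootSys.ncd (P : PosRootSys V) (S : Set V) : Set V :=
  S \ {α | α ∈ S ∩ P.Neg ∧ ∃ X : Finset V, ↑X ⊆ S ∩ P.Pos ∧ α + X.sum id ∈ P.Φ \ S}

/-- Positive closure deletion. -/
def PosRootSys.pcd (P : PosRootSys V) (S : Set V) : Set V :=
  S \ {α | α ∈ S ∩ P.Pos ∧ ∃ X : Finset V, ↑X ⊆ S ∩ P.Neg ∧ α + X.sum id ∈ P.Φ \ S}

/-- Meet formula on closed subsets. -/
def PosRootSys.wmeet (P : PosRootSys V) (R S : Set V) : Set V :=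
  P.ncd (P.toRootSys.clos ((R ∪ S) ∩ P.Pos) ∪ ((R ∩ S) ∩ P.Neg))

/-- Join formula on closed subsets. -/
def PosRootSys.wjoin (P : PosRootSys V) (R S : Set V) : Set V :=
  P.pcd (((R ∩ S) ∩ P.Pos) ∪ P.toRootSys.clos ((R ∪ S) ∩ P.Neg))


private lemma inner_multiset_sum (a : V) (N : Multiset V) :
    (inner ℝ a N.sum : ℝ) = (N.map (fun x => (inner ℝ a x : ℝ))).sum := by
  induction N using Multiset.induction with
  | empty => simp
  | cons b N ih => simp [inner_add_right, ih]

/-- If two roots have negative inner ℝ product and are not opposite, their sum is a root. -/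
private lemma sum_is_root (R : RootSys V) (hcr : R.IsCrystallographic)
    {α β : V} (hα : α ∈ R.Φ) (hβ : β ∈ R.Φ)
    (hneg : (inner ℝ α β : ℝ) < 0) (hne : β ≠ -α) : α + β ∈ R.Φ := by
  have hα0 : α ≠ 0 := R.nonzero α hα
  have hβ0 : β ≠ 0 := R.nonzero β hβ
  have ha : (0:ℝ) < inner ℝ α α := by
    rw [real_inner_self_eq_norm_sq]; exact pow_pos (norm_pos_iff.2 hα0) 2
  have hb : (0:ℝ) < inner ℝ β β := by
    rw [real_inner_self_eq_norm_sq]; exact pow_pos (norm_pos_iff.2 hβ0) 2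
  set a : ℝ := inner ℝ α α with ha_def
  set b : ℝ := inner ℝ β β with hb_def
  set c : ℝ := inner ℝ α β with hc_def
  obtain ⟨n₁, hn₁⟩ := hcr α hα β hβ
  obtain ⟨n₂, hn₂⟩ := hcr β hβ α hα
  rw [show (inner ℝ β α : ℝ) = inner ℝ α β from real_inner_comm α β] at hn₂
  -- hn₁ : 2 * c / a = n₁, hn₂ : 2 * c / b = n₂
  have hn₁neg : n₁ ≤ -1 := by
    have h : (n₁:ℝ) < 0 := by rw [← hn₁]; exact div_neg_of_neg_of_pos (by linarith) ha
    have : n₁ < 0 := by exact_mod_cast h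
    omega
  have hn₂neg : n₂ ≤ -1 := by
    have h : (n₂:ℝ) < 0 := by rw [← hn₂]; exact div_neg_of_neg_of_pos (by linarith) hb
    have : n₂ < 0 := by exact_mod_cast h
    omega
  have hcs : c * c ≤ a * b := real_inner_mul_inner_self_le α β
  rcases eq_or_lt_of_le hcs with heq | hlt
  · -- equality case: β is a multiple of α
    exfalso
    have hna : ‖α‖ > 0 := norm_pos_iff.2 hα0
    have hnb : ‖β‖ > 0 := norm_pos_iff.2 hβ0
    have habs : |c| = ‖α‖ * ‖β‖ := by
      have h1 : a = ‖α‖ ^ 2 := real_inner_self_eq_norm_sq α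
      have h2 : b = ‖β‖ ^ 2 := real_inner_self_eq_norm_sq β
      have : |c| ^ 2 = (‖α‖ * ‖β‖) ^ 2 := by rw [sq_abs]; ring_nf; nlinarith [heq]
      nlinarith [abs_nonneg c, mul_pos hna hnb]
    have h1 : |c / (‖α‖ * ‖β‖)| = 1 := by
      rw [abs_div, habs, abs_of_pos (mul_pos hna hnb)]
      field_simp
    obtain ⟨-, r, hr0, hrβ⟩ := (abs_real_inner_div_norm_mul_norm_eq_one_iff α β).1 h1
    have hβmem : β ∈ R.Φ ∩ {x : V | ∃ t : ℝ, x = t • α} := ⟨hβ, r, hrβ⟩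
    rw [R.line α hα] at hβmem
    rcases hβmem with h | h
    · rw [hc_def, h, ← ha_def] at hneg
      linarith
    · exact hne h
  · -- strict: (n₁ * n₂ : ℝ) < 4
    have hprod : (n₁:ℝ) * (n₂:ℝ) < 4 := by
      rw [← hn₁, ← hn₂]
      rw [div_mul_div_comm]
      rw [div_lt_iff₀ (mul_pos ha hb)]
      nlinarith
    have hprodZ : n₁ * n₂ ≤ 3 := by
      have h4 : (n₁ * n₂ : ℤ) < 4 := by exact_mod_cast hprod
      omega
    have hone : n₁ = -1 ∨ n₂ = -1 := by
      by_contra hcon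
      push_neg at hcon
      have h1 : n₁ ≤ -2 := by omega
      have h2 : n₂ ≤ -2 := by omega
      nlinarith
    rcases hone with h1 | h2
    · have := R.reflect α hα β hβ
      rw [hn₁, h1] at this
      simpa [add_comm] using this
    · have := R.reflect β hβ α hα
      rw [show (inner ℝ β α : ℝ) = inner ℝ α β from real_inner_comm α β, hn₂, h2] at this
      simpa using this

private lemma stmt5_aux (R : RootSys V) (hcr : R.IsCrystallographic)
    (S : Set V) (hS : R.IsPoset S) :
    ∀ n : ℕ, ∀ M : Multiset V, Multiset.card M ≤ n → M ≠ 0 →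
      (∀ x ∈ M, x ∈ S) → M.sum ≠ 0 := by
  obtain ⟨hSΦ, hanti, hclosed⟩ := hS
  classical
  intro n
  induction n with
  | zero => intro M hcard hM _; exact absurd (Multiset.card_eq_zero.1 (Nat.le_zero.1 hcard)) hM
  | succ n ih =>
    intro M hcard hM hMS hsum
    obtain ⟨α, hαM⟩ := Multiset.exists_mem_of_ne_zero hM
    set M' := M.erase α with hM'_def
    have hMc : M = α ::ₘ M' := (Multiset.cons_erase hαM).symm
    have hαS : α ∈ S := hMS α hαM
    rcases eq_or_ne M' 0 with h0 | h0
    · rw [hMc, h0] at hsum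
      simp at hsum
      exact R.nonzero α (hSΦ hαS) hsum
    · -- find β ∈ M' with ⟪α, β⟫ < 0
      have hsum' : α + M'.sum = 0 := by rw [hMc] at hsum; simpa using hsum
      have hinner : (inner ℝ α M'.sum : ℝ) < 0 := by
        have : (inner ℝ α (α + M'.sum) : ℝ) = 0 := by rw [hsum', inner_zero_right]
        rw [inner_add_right] at this
        have hpos : (0:ℝ) < inner ℝ α α := by
          rw [real_inner_self_eq_norm_sq]
          exact pow_pos (norm_pos_iff.2 (R.nonzero α (hSΦ hαS))) 2
        linarith
      have hex : ∃ β ∈ M', (inner ℝ α β : ℝ) < 0 := by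
        by_contra hno
        push_neg at hno
        have : (0:ℝ) ≤ (inner ℝ α M'.sum : ℝ) := by
          rw [inner_multiset_sum]
          refine Multiset.sum_nonneg ?_
          intro x hx
          obtain ⟨y, hy, rfl⟩ := Multiset.mem_map.1 hx
          exact hno y hy
        linarith
      obtain ⟨β, hβM', hβneg⟩ := hex
      have hβS : β ∈ S := hMS β (by rw [hMc]; exact Multiset.mem_cons_of_mem hβM')
      have hne : β ≠ -α := fun h => hanti α hαS (h ▸ hβS)
      have hroot : α + β ∈ R.Φ := sum_is_root R hcr (hSΦ hαS) (hSΦ hβS) hβneg hne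
      have hαβS : α + β ∈ S := hclosed α hαS β hβS hroot
      set N : Multiset V := (α + β) ::ₘ M'.erase β with hN_def
      have hMβ : M' = β ::ₘ M'.erase β := (Multiset.cons_erase hβM').symm
      refine ih N ?_ (by simp [hN_def]) ?_ ?_
      · have h1 : Multiset.card M = Multiset.card M' + 1 := by rw [hMc]; simp
        have h2 : Multiset.card M' = Multiset.card (M'.erase β) + 1 := by rw [hMβ]; simp
        simp only [hN_def, Multiset.card_cons]
        omega
      · intro x hx
        rcases Multiset.mem_cons.1 hx with rfl | hx'
        · exact hαβS
        · exact hMS x (by rw [hMc, hMβ]; exact Multiset.mem_cons_of_mem (Multiset.mem_cons_of_mem hx'))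
      · rw [hN_def, Multiset.sum_cons]
        have : M'.sum = β + (M'.erase β).sum := by rw [hMβ]; simp
        rw [this] at hsum'
        linear_combination (norm := abel) hsum'

theorem stmt5 (R : RootSys V) (hcr : R.IsCrystallographic)
    (S : Set V) (hS : R.IsPoset S)
    (M : Multiset V) (hM : M ≠ 0) (hMS : ∀ x ∈ M, x ∈ S) :
    M.sum ≠ 0 := by
  exact stmt5_aux R hcr S hS (Multiset.card M) M le_rfl hM hMS
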